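/- Let x : ℝ → H be such that for every s ≥ 0 the map r ↦ T (x r) has derivative A (x s) at s, and let x̄ : ℝ → H be a differentiable function with derivative x̄' such that T* (x̄' s) = A* (x̄ s) for every s ≥ 0. Then for every t ≥ 0, ⟪T* (x̄ 0), x t⟫ = ⟪x̄ t, T (x 0)⟫. Equivalently, the function s ↦ ⟪x̄ (t − s), T (x s)⟫ is constant on [0, t]. (Integration-by-parts identity between primal and dual PIE solutions, the key step in the proof of Theorem 1.) -/

import Mathlib

open ContinuousLinearMap
open scoped RealInnerProductSpace

/-- Integration-by-parts identity between primal and dual PIE solutions, the key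
step in the proof of Theorem 1. -/
theorem stmt_7
    {H : Type*}
    [NormedAddCommGroup H] [InnerProductSpace ℝ H] [CompleteSpace H]
    (T A : H →L[ℝ] H)
    (x : ℝ → H)
    (hx : ∀ s ≥ (0 : ℝ), HasDerivAt (fun r => T (x r)) (A (x s)) s)
    (xb xb' : ℝ → H)
    (hxbderiv : ∀ s : ℝ, HasDerivAt xb (xb' s) s)
    (hxbdyn : ∀ s ≥ (0 : ℝ), adjoint T (xb' s) = adjoint A (xb s)) :
    ∀ t ≥ (0 : ℝ),
      (⟪adjoint T (xb 0), x t⟫ = ⟪xb t, T (x 0)⟫) ∧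
      (∀ s₁ ∈ Set.Icc (0 : ℝ) t, ∀ s₂ ∈ Set.Icc (0 : ℝ) t,
        ⟪xb (t - s₁), T (x s₁)⟫ = ⟪xb (t - s₂), T (x s₂)⟫) := by
  intro t ht
  set g : ℝ → ℝ := fun s => ⟪xb (t - s), T (x s)⟫ with hg
  have hderiv : ∀ s ∈ Set.Icc (0 : ℝ) t, HasDerivAt g 0 s := by
    intro s hs
    have hlin : HasDerivAt (fun r : ℝ => t - r) (-1) s := by
      simpa using (hasDerivAt_id s).const_sub t
    have h1 : HasDerivAt (fun r : ℝ => xb (t - r)) (-xb' (t - s)) s := by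
      have h := (hxbderiv (t - s)).scomp s hlin
      simp only [neg_smul, one_smul] at h
      exact h
    have h2 := hx s hs.1
    have hd := h1.inner ℝ h2
    have key : (⟪xb (t - s), A (x s)⟫ + -⟪xb' (t - s), T (x s)⟫ : ℝ) = 0 := by
      have e1 : ⟪xb' (t - s), T (x s)⟫ = ⟪adjoint T (xb' (t - s)), x s⟫ :=
        (adjoint_inner_left T _ _).symm
      have e2 : ⟪adjoint A (xb (t - s)), x s⟫ = ⟪xb (t - s), A (x s)⟫ :=
        adjoint_inner_left A _ _
      rw [e1, hxbdyn (t - s) (by linarith [hs.2]), e2]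
      ring
    simp only [inner_neg_left] at hd
    exact key ▸ hd
  have hcont : ContinuousOn g (Set.Icc 0 t) :=
    fun s hs => ((hderiv s hs).continuousAt).continuousWithinAt
  have hconst : ∀ s ∈ Set.Icc (0 : ℝ) t, g s = g 0 := by
    intro s hs
    exact constant_of_has_deriv_right_zero hcont
      (fun r hr => ((hderiv r (Set.mem_Icc_of_Ico hr)).hasDerivWithinAt)) s hs
  constructor
  · have := hconst t ⟨ht, le_refl t⟩
    simp only [hg, sub_self, sub_zero] at this
    rw [adjoint_inner_left]
    exact this
  · intro s₁ hs₁ s₂ hs₂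
    rw [show (⟪xb (t - s₁), T (x s₁)⟫ = g s₁) from rfl, hconst s₁ hs₁, ← hconst s₂ hs₂]
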